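/- (Perfect privacy against a corrupted Referee.) For all p, q ∈ ZMod 2, the averaged four-qubit density operator (1/16) · Σ_{(m₂,m₅,s,μ) ∈ (ZMod 2)⁴} v v†, where v = |Z; p+m₂⟩ ⊗ |Z; q+m₅⟩ ⊗ |X; s⟩ ⊗ w_s(p·q + μ) with w₀(c) = |X; c⟩ and w₁(c) = |Y; c⟩, equals (1/16) · I₁₆, the maximally mixed state on four qubits. In particular this average is independent of p and q. -/

import Mathlib

open Matrix
open scoped BigOperators

noncomputable section

/-- `(-1)^c` as a complex number, for `c : ZMod 2`. -/
def sgn (c : ZMod 2) : ℂ := if c = 0 then 1 else -1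

/-- `|Z;c⟩ = e_c`, the eigenvector of Pauli `Z` with eigenvalue `(−1)^c`. -/
def ketZ (c : ZMod 2) : ZMod 2 → ℂ := fun d => if d = c then 1 else 0

/-- `|X;c⟩ = (e₀ + (−1)^c e₁)/√2`, the eigenvector of Pauli `X` with eigenvalue `(−1)^c`. -/
def ketX (c : ZMod 2) : ZMod 2 → ℂ :=
  fun d => (Real.sqrt 2 : ℂ)⁻¹ * (if d = 0 then 1 else sgn c)

/-- `|Y;c⟩ = (e₀ + (−1)^c·i·e₁)/√2`, the eigenvector of Pauli `Y` with eigenvalue `(−1)^c`. -/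
def ketY (c : ZMod 2) : ZMod 2 → ℂ :=
  fun d => (Real.sqrt 2 : ℂ)⁻¹ * (if d = 0 then 1 else sgn c * Complex.I)

/-- Tensor product of a family of single-qubit vectors. -/
def tensorVec {V : Type*} [Fintype V] (f : V → (ZMod 2 → ℂ)) : (V → ZMod 2) → ℂ :=
  fun x => ∏ i, f i (x i)

/-- Tensor (Kronecker) product of a family of single-qubit operators. -/
def tensorOp {V : Type*} [Fintype V] (f : V → Matrix (ZMod 2) (ZMod 2) ℂ) :
    Matrix (V → ZMod 2) (V → ZMod 2) ℂ :=
  fun x y => ∏ i, f i (x i) (y i)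

/-- The rank-one outer product `|ψ⟩⟨ψ| = v v†`. -/
def outer {α : Type*} (ψ : α → ℂ) : Matrix α α ℂ := fun x y => ψ x * star (ψ y)


lemma sum2 (f : ZMod 2 → ℂ) : ∑ m : ZMod 2, f m = f 0 + f 1 := by
  rw [show (Finset.univ : Finset (ZMod 2)) = {0, 1} from by decide]
  simp

lemma star_r : star ((Real.sqrt 2 : ℂ))⁻¹ = ((Real.sqrt 2 : ℂ))⁻¹ := by
  rw [star_inv₀, Complex.star_def, Complex.conj_ofReal]

lemma mul_r : ((Real.sqrt 2 : ℂ))⁻¹ * ((Real.sqrt 2 : ℂ))⁻¹ = 2⁻¹ := by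
  rw [← mul_inv, ← Complex.ofReal_mul, Real.mul_self_sqrt (by norm_num)]
  norm_num

lemma sum_shift (c : ZMod 2) (f : ZMod 2 → ℂ) : ∑ m : ZMod 2, f (c + m) = ∑ m : ZMod 2, f m :=
  Fintype.sum_equiv (Equiv.addLeft c) _ f (fun m => rfl)

lemma zmod2_cases (a : ZMod 2) : a = 0 ∨ a = 1 := by revert a; decide

lemma sumZ (a b : ZMod 2) : ∑ m : ZMod 2, ketZ m a * star (ketZ m b) = if a = b then 1 else 0 := by
  rcases zmod2_cases a with rfl | rfl <;> rcases zmod2_cases b with rfl | rfl <;> simp [ketZ, sum2] <;> decide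

lemma sumX (a b : ZMod 2) : ∑ c : ZMod 2, ketX c a * star (ketX c b) = if a = b then 1 else 0 := by
  rcases zmod2_cases a with rfl | rfl <;> rcases zmod2_cases b with rfl | rfl <;>
    simp [ketX, sgn, sum2, star_mul', star_r, mul_r] <;> ring_nf <;>
    simp [mul_r] <;> ring_nf
  all_goals norm_num [mul_r]

lemma sumY (a b : ZMod 2) : ∑ c : ZMod 2, ketY c a * star (ketY c b) = if a = b then 1 else 0 := by
  rcases zmod2_cases a with rfl | rfl <;> rcases zmod2_cases b with rfl | rfl <;>
    simp [ketY, sgn, sum2, star_mul', star_r, mul_r, Complex.star_def] <;> ring_nf <;>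
    simp [mul_r, Complex.I_sq] <;> ring_nf
  all_goals rw [inv_pow, ← Complex.ofReal_pow, Real.sq_sqrt (by norm_num)]; norm_num

lemma sumZ' (c a b : ZMod 2) :
    ∑ m : ZMod 2, ketZ (c + m) a * star (ketZ (c + m) b) = if a = b then 1 else 0 := by
  rw [← sumZ a b]; exact Fintype.sum_equiv (Equiv.addLeft c) _ _ (fun m => rfl)

lemma sumX' (c a b : ZMod 2) :
    ∑ m : ZMod 2, ketX (c + m) a * star (ketX (c + m) b) = if a = b then 1 else 0 := by
  rw [← sumX a b]; exact Fintype.sum_equiv (Equiv.addLeft c) _ _ (fun m => rfl)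

lemma sumY' (c a b : ZMod 2) :
    ∑ m : ZMod 2, ketY (c + m) a * star (ketY (c + m) b) = if a = b then 1 else 0 := by
  rw [← sumY a b]; exact Fintype.sum_equiv (Equiv.addLeft c) _ _ (fun m => rfl)

lemma split (A B : ZMod 2 → ℂ) (C : ZMod 2 × ZMod 2 → ℂ) :
    (∑ t : ZMod 2 × ZMod 2 × ZMod 2 × ZMod 2, A t.1 * (B t.2.1 * C t.2.2))
      = (∑ m, A m) * ((∑ m, B m) * (∑ u, C u)) := by
  rw [Fintype.sum_prod_type]
  simp_rw [← Finset.mul_sum]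
  rw [← Finset.sum_mul]
  congr 1
  rw [Fintype.sum_prod_type]
  simp_rw [← Finset.mul_sum]
  rw [← Finset.sum_mul]

/-- Perfect privacy against a corrupted Referee: averaging the pure
state `v = |Z; p+m₂⟩ ⊗ |Z; q+m₅⟩ ⊗ |X; s⟩ ⊗ w_s(p·q + μ)` (with `w₀ = |X;·⟩`,
`w₁ = |Y;·⟩`) over the uniformly random pads `(m₂, m₅, s, μ)` yields the maximally
mixed state `(1/16)·I₁₆` on four qubits; in particular the average is independent
of `p` and `q`. -/
theorem referee_privacy (p q : ZMod 2) :
    (16 : ℂ)⁻¹ • ∑ t : ZMod 2 × ZMod 2 × ZMod 2 × ZMod 2,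
        outer (tensorVec ![ketZ (p + t.1), ketZ (q + t.2.1), ketX t.2.2.1,
          (if t.2.2.1 = 0 then ketX else ketY) (p * q + t.2.2.2)])
      = (16 : ℂ)⁻¹ • (1 : Matrix (Fin 4 → ZMod 2) (Fin 4 → ZMod 2) ℂ) := by
  ext x y
  rw [Matrix.smul_apply, Matrix.smul_apply, Matrix.sum_apply, Matrix.one_apply]
  congr 1
  have key : ∀ t : ZMod 2 × ZMod 2 × ZMod 2 × ZMod 2,
      outer (tensorVec ![ketZ (p + t.1), ketZ (q + t.2.1), ketX t.2.2.1,
        (if t.2.2.1 = 0 then ketX else ketY) (p * q + t.2.2.2)]) x y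
      = (ketZ (p + t.1) (x 0) * star (ketZ (p + t.1) (y 0))) *
        ((ketZ (q + t.2.1) (x 1) * star (ketZ (q + t.2.1) (y 1))) *
         ((ketX t.2.2.1 (x 2) * star (ketX t.2.2.1 (y 2))) *
          ((if t.2.2.1 = 0 then ketX else ketY) (p * q + t.2.2.2) (x 3) *
           star ((if t.2.2.1 = 0 then ketX else ketY) (p * q + t.2.2.2) (y 3))))) := by
    intro t
    simp only [outer, tensorVec, Fin.prod_univ_four, Matrix.cons_val_zero,
      Matrix.cons_val_one, Matrix.head_cons, Matrix.cons_val_two, Matrix.tail_cons,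
      Matrix.cons_val_three, star_mul']
    ring
  rw [Finset.sum_congr rfl fun t _ => key t,
    split (fun m => ketZ (p + m) (x 0) * star (ketZ (p + m) (y 0)))
      (fun m => ketZ (q + m) (x 1) * star (ketZ (q + m) (y 1)))
      (fun u => (ketX u.1 (x 2) * star (ketX u.1 (y 2))) *
        ((if u.1 = 0 then ketX else ketY) (p * q + u.2) (x 3) *
         star ((if u.1 = 0 then ketX else ketY) (p * q + u.2) (y 3))))]
  rw [sumZ' p (x 0) (y 0), sumZ' q (x 1) (y 1)]
  have hC : (∑ u : ZMod 2 × ZMod 2, (ketX u.1 (x 2) * star (ketX u.1 (y 2))) *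
        ((if u.1 = 0 then ketX else ketY) (p * q + u.2) (x 3) *
         star ((if u.1 = 0 then ketX else ketY) (p * q + u.2) (y 3))))
      = (if x 2 = y 2 then 1 else 0) * (if x 3 = y 3 then 1 else 0) := by
    rw [Fintype.sum_prod_type]
    simp_rw [← Finset.mul_sum]
    rw [sum2]
    simp only [if_pos rfl, if_neg (by decide : ¬(1 : ZMod 2) = 0), if_true]
    rw [sumX' (p * q) (x 3) (y 3), sumY' (p * q) (x 3) (y 3), ← add_mul,
      ← sum2 (fun c => ketX c (x 2) * star (ketX c (y 2))), sumX (x 2) (y 2)]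
  rw [hC]
  have hxy : (x = y) ↔ (x 0 = y 0 ∧ x 1 = y 1 ∧ x 2 = y 2 ∧ x 3 = y 3) := by
    constructor
    · rintro rfl; exact ⟨rfl, rfl, rfl, rfl⟩
    · rintro ⟨h0, h1, h2, h3⟩; funext i; fin_cases i <;> assumption
  by_cases h0 : x 0 = y 0 <;> by_cases h1 : x 1 = y 1 <;> by_cases h2 : x 2 = y 2 <;>
    by_cases h3 : x 3 = y 3 <;> simp [h0, h1, h2, h3, hxy]
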